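/- Every tournament T contains a transitive subtournament on at least log2(|V(T)|) vertices. -/
import Mathlib


/-- A tournament: a directed graph in which, for every two distinct vertices `u, v`,
exactly one of `uv`, `vu` is an edge. -/
structure Tournament (V : Type*) where
  adj : V → V → Prop
  irrefl : ∀ v, ¬ adj v v
  total : ∀ u v, u ≠ v → (adj u v ↔ ¬ adj v u)

/-- A tournament is transitive if it has no directed cycles; for tournaments this is
equivalent to the adjacency relation being transitive. -/
def Tournament.IsTransitive {V : Type*} (T : Tournament V) : Prop :=
  ∀ u v w, T.adj u v → T.adj v w → T.adj u w

/-- A set of vertices inducing a transitive subtournament. -/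
def Tournament.IsTransSet {V : Type*} (T : Tournament V) (s : Set V) : Prop :=
  ∀ u ∈ s, ∀ v ∈ s, ∀ w ∈ s, T.adj u v → T.adj v w → T.adj u w

/-- The reversed tournament. -/
def Tournament.rev {V : Type*} (T : Tournament V) : Tournament V where
  adj u v := T.adj v u
  irrefl v := T.irrefl v
  total u v h := T.total v u h.symm

lemma Tournament.rev_transSet {V : Type*} (T : Tournament V) (s : Set V)
    (h : T.rev.IsTransSet s) : T.IsTransSet s := by
  intro u hu v hv w hw huv hvw
  exact h w hw v hv u hu hvw huv

lemma Tournament.insert_trans {V : Type*} [DecidableEq V] (T : Tournament V) (t : Finset V) (v0 : V)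
    (h1 : ∀ a ∈ t, T.adj v0 a) (h2 : ∀ a ∈ t, ¬ T.adj a v0)
    (ht : T.IsTransSet (↑t : Set V)) : T.IsTransSet (↑(insert v0 t) : Set V) := by
  intro u hu v hv w hw huv hvw
  simp only [Finset.coe_insert, Set.mem_insert_iff, Finset.mem_coe] at hu hv hw
  rcases hv with rfl | hv
  · rcases hu with rfl | hu
    · exact absurd huv (T.irrefl _)
    · exact absurd huv (h2 _ hu)
  rcases hu with rfl | hu
  · rcases hw with rfl | hw
    · exact absurd hvw (h2 _ hv)
    · exact h1 _ hw
  · rcases hw with rfl | hw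
    · exact absurd hvw (h2 _ hv)
    · exact ht u hu v hv w hw huv hvw

open Classical in
lemma tournament_aux {V : Type*} (T : Tournament V) (s : Finset V) :
    ∃ t : Finset V, t ⊆ s ∧ T.IsTransSet (↑t : Set V) ∧ s.card < 2 ^ t.card := by
  induction s using Finset.strongInduction with
  | _ s ih =>
    rcases s.eq_empty_or_nonempty with rfl | ⟨v0, hv0⟩
    · exact ⟨∅, Finset.Subset.refl _, by intro u hu; simp at hu, by simp⟩
    · set A := (s.erase v0).filter (fun x => T.adj v0 x) with hAdef
      set B := (s.erase v0).filter (fun x => ¬ T.adj v0 x) with hBdef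
      have hAB : A.card + B.card = s.card - 1 := by
        rw [hAdef, hBdef, Finset.card_filter_add_card_filter_not,
          Finset.card_erase_of_mem hv0]
      have hAs : A ⊂ s := by
        refine Finset.ssubset_of_subset_of_ssubset (Finset.filter_subset _ _) ?_
        exact Finset.erase_ssubset hv0
      have hBs : B ⊂ s := by
        refine Finset.ssubset_of_subset_of_ssubset (Finset.filter_subset _ _) ?_
        exact Finset.erase_ssubset hv0
      have hspos : 1 ≤ s.card := Finset.card_pos.mpr ⟨v0, hv0⟩
      by_cases hc : B.card ≤ A.card
      · obtain ⟨t, hts, htrans, hcard⟩ := ih A hAs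
        have hv0t : v0 ∉ t := fun h => (Finset.mem_erase.mp
          (Finset.mem_of_mem_filter _ (hts h))).1 rfl
        refine ⟨insert v0 t, ?_, ?_, ?_⟩
        · intro x hx
          rcases Finset.mem_insert.mp hx with rfl | hx
          · exact hv0
          · exact Finset.mem_of_mem_erase (Finset.mem_of_mem_filter _ (hts hx))
        · refine T.insert_trans t v0 (fun a ha => ?_) (fun a ha => ?_) htrans
          · exact (Finset.mem_filter.mp (hts ha)).2
          · have hadj := (Finset.mem_filter.mp (hts ha)).2
            have hne : a ≠ v0 := (Finset.mem_erase.mp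
              (Finset.mem_of_mem_filter _ (hts ha))).1
            exact fun h => ((T.total v0 a hne.symm).mp hadj) h
        · rw [Finset.card_insert_of_notMem hv0t, pow_succ]
          have h1 : s.card ≤ A.card + B.card + 1 := by omega
          have h2 : A.card + 1 ≤ 2 ^ t.card := hcard
          omega
      · obtain ⟨t, hts, htrans, hcard⟩ := ih B hBs
        have hv0t : v0 ∉ t := fun h => (Finset.mem_erase.mp
          (Finset.mem_of_mem_filter _ (hts h))).1 rfl
        refine ⟨insert v0 t, ?_, ?_, ?_⟩
        · intro x hx
          rcases Finset.mem_insert.mp hx with rfl | hx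
          · exact hv0
          · exact Finset.mem_of_mem_erase (Finset.mem_of_mem_filter _ (hts hx))
        · refine T.rev_transSet _ (T.rev.insert_trans t v0 (fun a ha => ?_)
            (fun a ha => ?_) (fun u hu v hv w hw huv hvw => htrans w hw v hv u hu hvw huv))
          · have hnadj := (Finset.mem_filter.mp (hts ha)).2
            have hne : a ≠ v0 := (Finset.mem_erase.mp
              (Finset.mem_of_mem_filter _ (hts ha))).1
            exact (T.total a v0 hne).mpr (by simpa using hnadj)
          · exact (Finset.mem_filter.mp (hts ha)).2
        · rw [Finset.card_insert_of_notMem hv0t, pow_succ]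
          have h1 : s.card ≤ A.card + B.card + 1 := by omega
          have h2 : B.card + 1 ≤ 2 ^ t.card := hcard
          omega

theorem tournament_log_transitive {V : Type*} [Fintype V] (T : Tournament V) :
    ∃ s : Finset V, T.IsTransSet (↑s : Set V) ∧
      Real.logb 2 (Fintype.card V) ≤ s.card := by
  obtain ⟨t, -, htrans, hcard⟩ := tournament_aux T Finset.univ
  refine ⟨t, htrans, ?_⟩
  rcases Nat.eq_zero_or_pos (Fintype.card V) with h0 | hpos
  · rw [h0]
    simp [Real.logb]
  · have h2 : (Fintype.card V : ℝ) ≤ (2 : ℝ) ^ (t.card : ℕ) := by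
      rw [Finset.card_univ] at hcard
      exact_mod_cast hcard.le
    calc Real.logb 2 (Fintype.card V) ≤ Real.logb 2 ((2:ℝ) ^ (t.card : ℕ)) := by
          exact Real.logb_le_logb_of_le (by norm_num) (by exact_mod_cast hpos) h2
      _ = t.card := by
          rw [show ((2:ℝ) ^ (t.card : ℕ)) = (2:ℝ) ^ (t.card : ℝ) by
            rw [Real.rpow_natCast], Real.logb_rpow (by norm_num) (by norm_num)]
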